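/- Estimate sequence gap contraction: let φ_0(P) = f(P^0) + σ D_h(P,P^0) and φ_{k+1}(P) = (1−θ_k)φ_k(P) + θ_k ( f(P^{k+1}) + β_k ⟨∇h(Y^k) − ∇h(P^{k+1}), P − P^{k+1}⟩ − ν_k ). If 0 ∈ ∂_{ν_k} f(P^{k+1}) + β_k(∇h(P^{k+1}) − ∇h(Y^k)), then for all P ∈ dom f, φ_{k+1}(P) − f(P) ≤ (1−θ_k)(φ_k(P) − f(P)). -/
import Mathlib


open scoped RealInnerProductSpace

theorem estimate_sequence_gap_contraction {E : Type*}
    [NormedAddCommGroup E] [InnerProductSpace ℝ E]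
    (f h : E → ℝ) (hf : ConvexOn ℝ Set.univ f)
    (gh : E → E)
    (σ βk νk θk : ℝ) (hσ : 0 < σ) (hβ : 0 < βk) (hν : 0 ≤ νk)
    (hθ : θk ∈ Set.Icc (0 : ℝ) 1)
    (Yk Pk1 : E) (φk φk1 : E → ℝ)
    (hφ : ∀ P, φk1 P = (1 - θk) * φk P
        + θk * (f Pk1 + βk * ⟪gh Yk - gh Pk1, P - Pk1⟫ - νk))
    (d : E) (hd : ∀ Q, f Pk1 + ⟪d, Q - Pk1⟫ - νk ≤ f Q)
    (hopt : d + βk • (gh Pk1 - gh Yk) = 0) :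
    ∀ P, φk1 P - f P ≤ (1 - θk) * (φk P - f P) := by
  intro P
  have hdval : d = βk • (gh Yk - gh Pk1) := by
    have := hopt
    rw [add_eq_zero_iff_eq_neg] at this
    rw [this, smul_sub, smul_sub]
    abel
  have hinner : ⟪d, P - Pk1⟫ = βk * ⟪gh Yk - gh Pk1, P - Pk1⟫ := by
    rw [hdval, real_inner_smul_left]
  have hle : f Pk1 + βk * ⟪gh Yk - gh Pk1, P - Pk1⟫ - νk - f P ≤ 0 := by
    have := hd P
    rw [hinner] at this
    linarith
  have := hφ P
  nlinarith [hθ.1, hθ.2]
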